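/- Let M ≥ 1 and let G be a connected simple graph on Fin M. Define sgn₋ : ℝ → ℝ by sgn₋(y) = −1 if y < 0 and sgn₋(y) = 0 if y ≥ 0. Let x : ℝ → Fin M → ℝ be such that each x_i is continuous and satisfies, for all t ≥ 0, x_i(t) = x_i(0) + ∫₀ᵗ sgn₋( Σ_{j ∈ N(i)} (x_j(s) − x_i(s)) ) ds, where N(i) is the neighborhood of i in G. Then the states reach the minimum of the initial conditions in finite time: there exists T ≥ 0 such that for all t ≥ T and all i, x_i(t) = min_j x_j(0). (Proposition 3 of the paper, applied to the estimates ā_{max,i} of the minimum of the maximum accelerations: min-consensus in finite time.) -/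

import Mathlib

open Filter MeasureTheory Set

section Aux

private lemma phi_facts {U : Set ℝ} (hUfin : volume U < ⊤) (a : ℝ) :
    Continuous (fun t => (volume (U ∩ Ioc a t)).toReal) ∧
    Monotone (fun t => (volume (U ∩ Ioc a t)).toReal) := by
  set φ := fun t => (volume (U ∩ Ioc a t)).toReal with hφ
  have hfin : ∀ t, volume (U ∩ Ioc a t) < ⊤ :=
    fun t => lt_of_le_of_lt (measure_mono inter_subset_left) hUfin
  have hmono : Monotone φ := by
    intro s t hst
    exact ENNReal.toReal_mono (hfin t).ne
      (measure_mono (inter_subset_inter_right _ (Ioc_subset_Ioc_right hst)))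
  refine ⟨?_, hmono⟩
  have hlip : LipschitzWith 1 φ := by
    apply LipschitzWith.of_dist_le_mul
    intro s t
    wlog h : t ≤ s generalizing s t
    · rw [dist_comm, dist_comm s t]; exact this t s (le_of_not_ge h)
    rw [Real.dist_eq, Real.dist_eq, abs_of_nonneg (sub_nonneg.2 (hmono h)),
      abs_of_nonneg (sub_nonneg.2 h), NNReal.coe_one, one_mul]
    have hsub : U ∩ Ioc a s ⊆ (U ∩ Ioc a t) ∪ Ioc t s := by
      intro u hu
      rcases le_or_gt u t with h'|h'
      · exact Or.inl ⟨hu.1, hu.2.1, h'⟩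
      · exact Or.inr ⟨h', hu.2.2⟩
    have : volume (U ∩ Ioc a s) ≤ volume (U ∩ Ioc a t) + ENNReal.ofReal (s - t) := by
      calc volume (U ∩ Ioc a s) ≤ volume ((U ∩ Ioc a t) ∪ Ioc t s) := measure_mono hsub
        _ ≤ volume (U ∩ Ioc a t) + volume (Ioc t s) := measure_union_le _ _
        _ = volume (U ∩ Ioc a t) + ENNReal.ofReal (s - t) := by rw [Real.volume_Ioc]
    have h2 : (volume (U ∩ Ioc a s)).toReal ≤ (volume (U ∩ Ioc a t)).toReal + (s - t) := by
      have := ENNReal.toReal_mono (by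
        exact ENNReal.add_ne_top.2 ⟨(hfin t).ne, ENNReal.ofReal_ne_top⟩) this
      rwa [ENNReal.toReal_add (hfin t).ne ENNReal.ofReal_ne_top,
        ENNReal.toReal_ofReal (sub_nonneg.2 h)] at this
    linarith
  exact hlip.continuous

/-- Covering lemma: a continuous function with speed-limit 1 that can only
decrease at rate `ε` outside an open set `U` loses at most `ε(b-a) + |U|`. -/
private lemma cov_lemma {f : ℝ → ℝ} {a b : ℝ} (hab : a ≤ b) (hf : Continuous f)
    (hlip : ∀ s t, a ≤ s → s ≤ t → f s - f t ≤ t - s)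
    {U : Set ℝ} (hU : IsOpen U) (hUfin : volume U < ⊤) {ε : ℝ} (hε : 0 < ε)
    (key : ∀ s, a ≤ s → s < b → s ∉ U →
      ∃ h₀ > 0, ∀ h, 0 < h → h ≤ h₀ → f s - f (s + h) ≤ ε * h) :
    f a - f b ≤ ε * (b - a) + (volume U).toReal := by
  obtain ⟨hφc, hφmono⟩ := phi_facts hUfin a
  set φ := fun t => (volume (U ∩ Ioc a t)).toReal with hφdef
  have hfin : ∀ t, volume (U ∩ Ioc a t) < ⊤ :=
    fun t => lt_of_le_of_lt (measure_mono inter_subset_left) hUfin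
  set S := Icc a b ∩ {t | f a - f t ≤ ε * (t - a) + φ t} with hS
  have haS : a ∈ S := by
    refine ⟨⟨le_refl a, hab⟩, ?_⟩
    simp only [Set.mem_setOf_eq, sub_self, mul_zero]
    have : φ a = 0 := by simp [hφdef]
    rw [this]; linarith
  have hSclosed : IsClosed S :=
    isClosed_Icc.inter (isClosed_le (by fun_prop) (by fun_prop))
  have hSbdd : BddAbove S := ⟨b, fun t ht => ht.1.2⟩
  set c := sSup S with hc
  have hcS : c ∈ S := hSclosed.csSup_mem ⟨a, haS⟩ hSbdd
  have hac : a ≤ c := hcS.1.1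
  have hcb : c ≤ b := hcS.1.2
  rcases eq_or_lt_of_le hcb with hceq | hclt
  · rw [← hceq]
    refine le_trans hcS.2 ?_
    have : φ c ≤ (volume U).toReal :=
      ENNReal.toReal_mono hUfin.ne (measure_mono inter_subset_left)
    linarith
  · exfalso
    have hstep : ∃ t ∈ S, c < t := by
      by_cases hcU : c ∈ U
      · obtain ⟨r, hr, hball⟩ := Metric.isOpen_iff.1 hU c hcU
        set r' := min (r / 2) (b - c) with hr'
        have hr'pos : 0 < r' := lt_min (by linarith) (by linarith)
        refine ⟨c + r', ⟨⟨by linarith, by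
          have : r' ≤ b - c := min_le_right _ _; linarith⟩, ?_⟩, by linarith⟩
        have hsubU : Ioc c (c + r') ⊆ U := by
          intro u hu
          apply hball
          rw [Metric.mem_ball, Real.dist_eq, abs_of_pos (by linarith [hu.1] : (0:ℝ) < u - c)]
          have : r' ≤ r / 2 := min_le_left _ _
          linarith [hu.2]
        have hsplit : U ∩ Ioc a (c + r') = (U ∩ Ioc a c) ∪ Ioc c (c + r') := by
          rw [← Set.Ioc_union_Ioc_eq_Ioc hac (by linarith : c ≤ c + r'),
            Set.inter_union_distrib_left, Set.inter_eq_self_of_subset_right hsubU]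
        have hdisj : Disjoint (U ∩ Ioc a c) (Ioc c (c + r')) :=
          Disjoint.mono_left inter_subset_right (Set.Ioc_disjoint_Ioc_of_le le_rfl)
        have hvol : φ (c + r') = φ c + r' := by
          simp only [hφdef, hsplit]
          rw [measure_union hdisj measurableSet_Ioc, Real.volume_Ioc,
            ENNReal.toReal_add (hfin c).ne ENNReal.ofReal_ne_top,
            ENNReal.toReal_ofReal (by linarith)]
          ring_nf
        have hfl : f c - f (c + r') ≤ r' := by
          have := hlip c (c + r') hac (by linarith)
          linarith
        have hthis := hcS.2
        simp only [Set.mem_setOf_eq] at hthis ⊢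
        rw [hvol]
        have hεr : ε * (c - a) ≤ ε * (c + r' - a) := by nlinarith
        linarith
      · obtain ⟨h₀, hh₀, hkey⟩ := key c hac hclt hcU
        set r' := min h₀ (b - c) with hr'
        have hr'pos : 0 < r' := lt_min hh₀ (by linarith)
        refine ⟨c + r', ⟨⟨by linarith, by
          have : r' ≤ b - c := min_le_right _ _; linarith⟩, ?_⟩, by linarith⟩
        have hfl : f c - f (c + r') ≤ ε * r' := hkey r' hr'pos (min_le_left _ _)
        have hφle : φ c ≤ φ (c + r') := hφmono (by linarith)
        have hthis := hcS.2
        simp only [Set.mem_setOf_eq] at hthis ⊢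
        have hεr : ε * (c + r' - a) = ε * (c - a) + ε * r' := by ring
        linarith
    obtain ⟨t, htS, hct⟩ := hstep
    exact absurd (le_csSup hSbdd htS) (not_le.2 hct)

private lemma walk_boundary {V : Type*} {G : SimpleGraph V} {S : Set V} :
    ∀ {u v : V}, G.Walk u v → u ∈ S → v ∉ S →
      ∃ a b, a ∈ S ∧ b ∉ S ∧ G.Adj a b := by
  intro u v w
  induction w with
  | nil => intro h h'; exact absurd h h'
  | cons h p ih =>
    intro hu hv
    rename_i a c d
    by_cases hc : c ∈ S
    · exact ih hc hv
    · exact ⟨a, c, hu, hc, h⟩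

end Aux

/-- Proposition 3 (min-consensus in finite time): under the discontinuous
consensus dynamics with sgn₋ (in integral/Carathéodory form), all states reach
the minimum of the initial conditions in finite time. -/
theorem min_consensus_finite_time
    (M : ℕ) (hM : 1 ≤ M)
    (G : SimpleGraph (Fin M)) [DecidableRel G.Adj] (hG : G.Connected)
    (sgnNeg : ℝ → ℝ)
    (hsgn : ∀ y : ℝ, sgnNeg y = if y < 0 then -1 else 0)
    (x : ℝ → Fin M → ℝ)
    (hcont : ∀ i : Fin M, Continuous (fun t => x t i))
    (hdyn : ∀ (i : Fin M) (t : ℝ), 0 ≤ t →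
      x t i = x 0 i + ∫ s in (0 : ℝ)..t,
        sgnNeg (∑ j ∈ G.neighborFinset i, (x s j - x s i))) :
    ∃ T ≥ (0 : ℝ), ∀ t ≥ T, ∀ i : Fin M,
      x t i = Finset.univ.inf' ⟨⟨0, by omega⟩, Finset.mem_univ _⟩ (x 0) := by
  have hne : (Finset.univ : Finset (Fin M)).Nonempty := ⟨⟨0, by omega⟩, Finset.mem_univ _⟩
  set F : Fin M → ℝ → ℝ := fun i s => ∑ j ∈ G.neighborFinset i, (x s j - x s i) with hF
  have hFc : ∀ i, Continuous (F i) :=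
    fun i => continuous_finset_sum _ (fun j _ => (hcont j).sub (hcont i))
  set g : Fin M → ℝ → ℝ := fun i s => if F i s < 0 then -1 else 0 with hg
  have hgm : ∀ i, Measurable (g i) := fun i =>
    Measurable.ite (measurableSet_lt (hFc i).measurable measurable_const)
      measurable_const measurable_const
  have hgnonpos : ∀ i s, g i s ≤ 0 := by
    intro i s; simp only [hg]; split <;> norm_num
  have hgbd : ∀ i s, ‖g i s‖ ≤ 1 := by
    intro i s; simp only [hg]; split <;> simp
  have hgint : ∀ (i : Fin M) (a b : ℝ), IntervalIntegrable (g i) volume a b := by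
    intro i a b
    rw [intervalIntegrable_iff]
    refine ((integrableOn_const_iff (C := (1:ℝ))).2 (Or.inr ?_)).mono'
      ((hgm i).aestronglyMeasurable.restrict) (ae_of_all _ fun s => hgbd i s)
    exact measure_Ioc_lt_top
  have hdyn' : ∀ (i : Fin M) (t : ℝ), 0 ≤ t →
      x t i = x 0 i + ∫ s in (0:ℝ)..t, g i s := by
    intro i t ht
    rw [hdyn i t ht]
    congr 1
    apply intervalIntegral.integral_congr
    intro s _
    exact hsgn _
  have hx_eq : ∀ (i : Fin M) (s t : ℝ), 0 ≤ s → s ≤ t →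
      x t i = x s i + ∫ u in s..t, g i u := by
    intro i s t hs hst
    have h1 := hdyn' i s hs
    have h2 := hdyn' i t (hs.trans hst)
    have h3 := intervalIntegral.integral_add_adjacent_intervals (hgint i 0 s) (hgint i s t)
    rw [h2, h1, ← h3]
    ring
  set B : Fin M → Set ℝ := fun i => {u | F i u < 0} with hB
  have hBopen : ∀ i, IsOpen (B i) := fun i => isOpen_lt (hFc i) continuous_const
  have hdec : ∀ (i : Fin M) (s t : ℝ), 0 ≤ s → s ≤ t →
      x s i - x t i = (volume (B i ∩ Ioc s t)).toReal := by
    intro i s t hs hst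
    have h0 := hx_eq i s t hs hst
    have hint : ∫ u in s..t, g i u = -((volume (B i ∩ Ioc s t)).toReal) := by
      rw [intervalIntegral.integral_of_le hst]
      have hind : ∀ u, g i u = Set.indicator (B i) (fun _ => (-1:ℝ)) u := by
        intro u
        simp only [hg, hB, Set.indicator_apply, Set.mem_setOf_eq]
      simp_rw [hind]
      rw [MeasureTheory.setIntegral_indicator (hBopen i).measurableSet,
        MeasureTheory.setIntegral_const, Set.inter_comm]
      simp [smul_eq_mul, mul_comm]
      rfl
    rw [h0, hint]
    ring
  have hvolIoc : ∀ (i : Fin M) (s t : ℝ), s ≤ t →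
      (volume (B i ∩ Ioc s t)).toReal ≤ t - s := by
    intro i s t hst
    apply ENNReal.toReal_le_of_le_ofReal (by linarith)
    calc volume (B i ∩ Ioc s t) ≤ volume (Ioc s t) := measure_mono inter_subset_right
      _ = ENNReal.ofReal (t - s) := Real.volume_Ioc
  have hmono : ∀ (i : Fin M) (s t : ℝ), 0 ≤ s → s ≤ t → x t i ≤ x s i := by
    intro i s t hs hst
    have := hdec i s t hs hst
    have h2 : 0 ≤ (volume (B i ∩ Ioc s t)).toReal := ENNReal.toReal_nonneg
    linarith
  have hlipx : ∀ (i : Fin M) (s t : ℝ), 0 ≤ s → s ≤ t → x s i - x t i ≤ t - s := by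
    intro i s t hs hst
    rw [hdec i s t hs hst]
    exact hvolIoc i s t hst
  set v : ℝ → ℝ := fun t => Finset.univ.inf' hne (x t) with hv
  have hvle : ∀ (t : ℝ) (i : Fin M), v t ≤ x t i :=
    fun t i => Finset.inf'_le _ (Finset.mem_univ i)
  have hvc : Continuous v := by
    rw [continuous_iff_continuousAt]
    intro t
    exact ContinuousAt.finset_inf'_apply hne (fun i _ => (hcont i).continuousAt)
  have hlipv : ∀ s t, 0 ≤ s → s ≤ t → v s - v t ≤ t - s := by
    intro s t hs hst
    obtain ⟨i, _, hi⟩ := Finset.exists_mem_eq_inf' hne (x t)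
    have h1 : v s ≤ x s i := hvle s i
    have h2 := hlipx i s t hs hst
    have h3 : v t = x t i := hi
    linarith
  have hvmono : ∀ s t, 0 ≤ s → s ≤ t → v t ≤ v s := by
    intro s t hs hst
    obtain ⟨i, _, hi⟩ := Finset.exists_mem_eq_inf' hne (x s)
    have h1 : v t ≤ x t i := hvle t i
    have h2 := hmono i s t hs hst
    have h3 : v s = x s i := hi
    linarith
  -- min preservation
  have hpres : ∀ t, 0 ≤ t → v 0 ≤ v t := by
    intro t ht
    by_contra hlt
    push_neg at hlt
    set c := v 0 - v t with hcdef
    have hcpos : 0 < c := by simp only [hcdef]; linarith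
    set E : Set ℝ := ⋃ i, {u | u ∉ B i ∧ ¬ Tendsto
      (fun r => volume (B i ∩ Metric.closedBall u r) / volume (Metric.closedBall u r))
      (nhdsWithin 0 (Ioi 0)) (nhds 0)} with hEdef
    have hE : volume E = 0 := by
      apply measure_iUnion_null
      intro i
      have hae := Besicovitch.ae_tendsto_measure_inter_div_of_measurableSet
        (volume : Measure ℝ) (hBopen i).measurableSet
      rw [MeasureTheory.ae_iff] at hae
      refine measure_mono_null ?_ hae
      intro u hu hT
      simp only [Set.mem_setOf_eq] at hu hT
      exact hu.2 (by rwa [Set.indicator_of_notMem hu.1] at hT)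
    set ε := c / (4 * (t + 1)) with hεdef
    have hεpos : 0 < ε := by positivity
    set δ := c / 4 with hδdef
    have hδpos : 0 < δ := by positivity
    obtain ⟨U, hEU, hUopen, hUvol⟩ := Set.exists_isOpen_lt_of_lt E (ENNReal.ofReal δ)
      (by rw [hE]; exact ENNReal.ofReal_pos.2 hδpos)
    have hUfin : volume U < ⊤ := hUvol.trans_le le_top
    have key : ∀ s, 0 ≤ s → s < t → s ∉ U →
        ∃ h₀ > 0, ∀ h, 0 < h → h ≤ h₀ → v s - v (s + h) ≤ ε * h := by
      intro s hs hst hsU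
      have hall : ∀ i : Fin M, ∃ h₀ > 0, ∀ h', 0 < h' → h' ≤ h₀ →
          v s - x (s + h') i ≤ ε * h' := by
        intro i
        rcases eq_or_lt_of_le (hvle s i) with heq | hgt
        · -- argmin case
          have hFs : 0 ≤ F i s := by
            apply Finset.sum_nonneg
            intro j _
            have h1 := hvle s j
            linarith
          have hnB : s ∉ B i := by
            simp only [hB, Set.mem_setOf_eq]
            linarith
          have hsE : s ∉ E := fun h => hsU (hEU h)
          have hT : Tendsto
              (fun r => volume (B i ∩ Metric.closedBall s r) / volume (Metric.closedBall s r))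
              (nhdsWithin 0 (Ioi 0)) (nhds 0) := by
            by_contra hT
            exact hsE (Set.mem_iUnion.2 ⟨i, hnB, hT⟩)
          rw [ENNReal.tendsto_nhds_zero] at hT
          have h1 := hT (ENNReal.ofReal (ε/2)) (ENNReal.ofReal_pos.2 (by positivity))
          obtain ⟨δ₀, hδ₀pos, hδ₀sub⟩ := Metric.mem_nhdsWithin_iff.1 h1
          refine ⟨δ₀/2, by positivity, ?_⟩
          intro h' h'pos h'le
          have hmem : h' ∈ Metric.ball (0:ℝ) δ₀ ∩ Ioi 0 := by
            constructor
            · rw [Metric.mem_ball, Real.dist_eq, sub_zero, abs_of_pos h'pos]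
              linarith
            · exact h'pos
          have hr := hδ₀sub hmem
          simp only [Set.mem_setOf_eq] at hr
          have hcb : volume (Metric.closedBall s h') = ENNReal.ofReal (2*h') :=
            Real.volume_closedBall s h'
          have hne0 : volume (Metric.closedBall s h') ≠ 0 := by
            rw [hcb]
            exact (ENNReal.ofReal_pos.2 (by linarith)).ne'
          have hnetop : volume (Metric.closedBall s h') ≠ ⊤ := by
            rw [hcb]; exact ENNReal.ofReal_ne_top
          have h2 : volume (B i ∩ Metric.closedBall s h') ≤
              ENNReal.ofReal (ε/2) * volume (Metric.closedBall s h') :=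
            (ENNReal.div_le_iff_le_mul (Or.inl hne0) (Or.inl hnetop)).1 hr
          have h3 : volume (B i ∩ Ioc s (s + h')) ≤ ENNReal.ofReal (ε * h') := by
            refine le_trans (measure_mono (inter_subset_inter_right _ ?_)) (le_trans h2 ?_)
            · intro u hu
              rw [Metric.mem_closedBall, Real.dist_eq,
                abs_of_pos (by linarith [hu.1] : (0:ℝ) < u - s)]
              linarith [hu.2]
            · rw [hcb, ← ENNReal.ofReal_mul (by positivity)]
              apply ENNReal.ofReal_le_ofReal
              nlinarith
          have h4 := hdec i s (s + h') hs (by linarith)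
          have h5 : (volume (B i ∩ Ioc s (s + h'))).toReal ≤ ε * h' :=
            ENNReal.toReal_le_of_le_ofReal (by positivity) h3
          linarith [h4, h5, heq]
        · -- strictly above min
          have hcA : Tendsto (fun u => x u i) (nhds s) (nhds (x s i)) := (hcont i).continuousAt
          have hpre := hcA (Ioi_mem_nhds hgt)
          obtain ⟨δ₁, hδ₁pos, hδ₁sub⟩ := Metric.mem_nhds_iff.1 hpre
          refine ⟨δ₁/2, by positivity, ?_⟩
          intro h' h'pos h'le
          have hmem : s + h' ∈ Metric.ball s δ₁ := by
            rw [Metric.mem_ball, Real.dist_eq, add_sub_cancel_left, abs_of_pos h'pos]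
            linarith
          have := hδ₁sub hmem
          simp only [Set.mem_preimage, Set.mem_Ioi] at this
          nlinarith
      choose h₀f hpos hprop using hall
      refine ⟨Finset.univ.inf' hne h₀f, ?_, ?_⟩
      · show (0:ℝ) < Finset.univ.inf' hne h₀f
        rw [Finset.lt_inf'_iff]
        intro i _
        exact hpos i
      · intro h hpos' hle
        obtain ⟨i₀, _, hi₀⟩ := Finset.exists_mem_eq_inf' hne (x (s + h))
        have := hprop i₀ h hpos' (hle.trans (Finset.inf'_le _ (Finset.mem_univ i₀)))
        have h3 : v (s + h) = x (s + h) i₀ := hi₀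
        linarith
    have hcov := cov_lemma ht hvc (fun s t' hs hst' => hlipv s t' hs hst')
      hUopen hUfin hεpos key
    have hUt : (volume U).toReal ≤ δ :=
      ENNReal.toReal_le_of_le_ofReal (le_of_lt hδpos) hUvol.le
    have hεt : ε * (t - 0) ≤ c / 4 := by
      rw [sub_zero]
      have h1 : ε * t ≤ ε * (t + 1) := by nlinarith
      have ht1 : t + 1 ≠ 0 := by linarith
      have h2 : ε * (t + 1) = c / 4 := by
        rw [hεdef]
        field_simp
      linarith
    simp only [hcdef] at hcov hεt hUt ⊢
    linarith
  -- finite-time consensus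
  set m := Finset.univ.inf' hne (x 0) with hm
  have hmv : m = v 0 := rfl
  set D0 := ∑ i : Fin M, x 0 i with hD0
  set T := max 0 (D0 - M * m) + 1 with hT
  have hT0 : (0:ℝ) ≤ T := by
    have := le_max_left (0:ℝ) (D0 - M * m)
    linarith
  have hT1 : D0 - M * m ≤ T - 1 := by
    have := le_max_right (0:ℝ) (D0 - M * m)
    linarith
  have hcons : ∃ τ ∈ Icc (0:ℝ) T, ∀ i j : Fin M, x τ i = x τ j := by
    by_contra hno
    push_neg at hno
    have hkey : ∀ τ ∈ Icc (0:ℝ) T, ∑ i : Fin M, g i τ ≤ -1 := by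
      intro τ hτ
      obtain ⟨i₁, j₁, hneq⟩ := hno τ hτ
      set w := Finset.univ.sup' hne (x τ) with hw
      obtain ⟨i₀, _, hi₀⟩ := Finset.exists_mem_eq_sup' hne (x τ)
      set Smax : Set (Fin M) := {i | x τ i = w} with hSmax
      have hi₀S : i₀ ∈ Smax := hi₀.symm
      have hlew : ∀ j, x τ j ≤ w := fun j => Finset.le_sup' _ (Finset.mem_univ j)
      have hexj : ∃ j, j ∉ Smax := by
        by_contra hall
        push_neg at hall
        have h1 : x τ i₁ = w := hall i₁
        have h2 : x τ j₁ = w := hall j₁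
        exact hneq (h1.trans h2.symm)
      obtain ⟨j₂, hj₂⟩ := hexj
      obtain ⟨a, b, haS, hbS, hab⟩ :=
        walk_boundary ((hG.preconnected i₀ j₂).some) hi₀S hj₂
      have hFa : F a τ < 0 := by
        have hterm : ∀ j ∈ G.neighborFinset a, x τ j - x τ a ≤ 0 := by
          intro j _
          have := hlew j
          have haw : x τ a = w := haS
          linarith
        have hbmem : b ∈ G.neighborFinset a := (SimpleGraph.mem_neighborFinset _ _ _).2 hab
        have hblt : x τ b - x τ a < 0 := by
          have haw : x τ a = w := haS
          have hbw : x τ b ≠ w := hbS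
          have := hlew b
          rcases lt_or_eq_of_le this with h | h
          · linarith
          · exact absurd h hbw
        calc F a τ = ∑ j ∈ G.neighborFinset a, (x τ j - x τ a) := rfl
          _ < ∑ j ∈ G.neighborFinset a, (0:ℝ) :=
            Finset.sum_lt_sum hterm ⟨b, hbmem, hblt⟩
          _ = 0 := by simp
      have hga : g a τ = -1 := if_pos hFa
      calc ∑ i : Fin M, g i τ ≤ ∑ i : Fin M, (if i = a then (-1:ℝ) else 0) := by
            apply Finset.sum_le_sum
            intro i _
            by_cases hia : i = a
            · subst hia; rw [hga]; simp
            · rw [if_neg hia]; exact hgnonpos i τ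
        _ = -1 := by rw [Finset.sum_ite_eq' Finset.univ a (fun _ => (-1:ℝ))]; simp
    have hsumint : IntervalIntegrable (fun u => ∑ i : Fin M, g i u) volume 0 T := by
      rw [intervalIntegrable_iff]
      exact integrable_finset_sum _ (fun i _ => intervalIntegrable_iff.1 (hgint i 0 T))
    have hint1 : ∫ u in (0:ℝ)..T, (∑ i : Fin M, g i u) ≤ ∫ u in (0:ℝ)..T, (-1:ℝ) :=
      intervalIntegral.integral_mono_on hT0 hsumint intervalIntegrable_const hkey
    have hintc : ∫ u in (0:ℝ)..T, (-1:ℝ) = -T := by simp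
    have hsum : ∑ i : Fin M, x T i = D0 + ∫ u in (0:ℝ)..T, ∑ i : Fin M, g i u := by
      rw [intervalIntegral.integral_finset_sum (fun i _ => hgint i 0 T), hD0,
        ← Finset.sum_add_distrib]
      exact Finset.sum_congr rfl fun i _ => hdyn' i T hT0
    have h5 : (M:ℝ) * m ≤ ∑ i : Fin M, x T i := by
      have hmm : (M:ℝ) * m = ∑ _i : Fin M, m := by
        rw [Finset.sum_const, Finset.card_univ, Fintype.card_fin, nsmul_eq_mul]
      rw [hmm]
      apply Finset.sum_le_sum
      intro i _
      calc m = v 0 := hmv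
        _ ≤ v T := hpres T hT0
        _ ≤ x T i := hvle T i
    linarith
  obtain ⟨τ, ⟨hτ0, hτT⟩, hτeq⟩ := hcons
  have hxτ : ∀ i, x τ i = m := by
    intro i
    obtain ⟨i₀, _, hi₀⟩ := Finset.exists_mem_eq_inf' hne (x 0)
    have h1 : v τ ≤ m := by
      calc v τ ≤ x τ i₀ := hvle τ i₀
        _ ≤ x 0 i₀ := hmono i₀ 0 τ le_rfl hτ0
        _ = m := hi₀.symm
    have h2 : m ≤ v τ := hmv ▸ hpres τ hτ0
    obtain ⟨i₁, _, hi₁⟩ := Finset.exists_mem_eq_inf' hne (x τ)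
    have h3 : x τ i = v τ := by
      have h4 : v τ = x τ i₁ := hi₁
      rw [h4]
      exact hτeq i i₁
    linarith
  refine ⟨τ, hτ0, fun t ht i => ?_⟩
  have h1 : x t i ≤ m := (hxτ i) ▸ hmono i τ t hτ0 ht
  have h2 : m ≤ x t i := le_trans (hmv ▸ hpres t (hτ0.trans ht)) (hvle t i)
  exact le_antisymm h1 h2
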